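/- Let φ : M → M be a bijection on a set M, ω : M → ℝ^d a bounded function, A ∈ ℝ^{N×N} with ρ(A) < 1, and C ∈ ℝ^{N×d}. Define f(x) = ∑_{k=0}^∞ Aᵏ C ω(φ^{-k}(x)). Then f satisfies the consistency relation f(φ(x)) = A f(x) + C ω(φ(x)) for all x ∈ M. -/

import Mathlib

open Matrix Filter Topology MeasureTheory ProbabilityTheory

attribute [local instance] Matrix.linftyOpNormedRing Matrix.linftyOpNormedAddCommGroup

/-- The spectral radius of a real square matrix: the maximum modulus of its complex
eigenvalues. -/
noncomputable def specRad {N : ℕ} (A : Matrix (Fin N) (Fin N) ℝ) : ℝ :=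
  sSup ((fun z : ℂ => ‖z‖) '' spectrum ℂ (A.map Complex.ofReal))

attribute [local instance] Matrix.linftyOpNormedAlgebra

lemma norm_map_ofReal {m n : ℕ} (M : Matrix (Fin m) (Fin n) ℝ) :
    ‖M.map Complex.ofReal‖ = ‖M‖ := by
  have h : ‖M.map Complex.ofReal‖₊ = ‖M‖₊ := by
    simp only [Matrix.linfty_opNNNorm_def, Matrix.map_apply, Complex.nnnorm_real]
  calc ‖M.map Complex.ofReal‖ = (‖M.map Complex.ofReal‖₊ : ℝ) := rfl
    _ = (‖M‖₊ : ℝ) := by rw [h]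
    _ = ‖M‖ := rfl

lemma summable_norm_pow {N : ℕ} (A : Matrix (Fin N) (Fin N) ℝ) (hA : specRad A < 1) :
    Summable fun k : ℕ => ‖A ^ k‖ := by
  set B : Matrix (Fin N) (Fin N) ℂ := A.map Complex.ofReal with hBdef
  have hmap : ∀ k : ℕ, B ^ k = (A ^ k).map Complex.ofReal := by
    intro k
    have : B = Complex.ofRealHom.mapMatrix A := rfl
    rw [this, ← map_pow]
    rfl
  have hB : spectralRadius ℂ B < 1 := by
    have hb : BddAbove ((fun z : ℂ => ‖z‖) '' spectrum ℂ B) :=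
      ((spectrum.isCompact B).image continuous_norm).bddAbove
    calc spectralRadius ℂ B ≤ ENNReal.ofReal (specRad A) := by
          refine iSup₂_le fun z hz => ?_
          rw [← ENNReal.ofReal_coe_nnreal, coe_nnnorm]
          exact ENNReal.ofReal_le_ofReal
            (le_csSup hb ⟨z, hz, rfl⟩)
      _ < 1 := ENNReal.ofReal_lt_one.mpr hA
  obtain ⟨r, hr1, hr2⟩ := ENNReal.lt_iff_exists_nnreal_btwn.mp hB
  have hrlt : (r : ℝ) < 1 := by exact_mod_cast hr2
  have hev : ∀ᶠ n : ℕ in atTop, (‖B ^ n‖₊ : ENNReal) ^ (1 / (n : ℝ)) < (r : ENNReal) :=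
    (spectrum.pow_nnnorm_pow_one_div_tendsto_nhds_spectralRadius B).eventually_lt_const hr1
  have hbound : ∀ᶠ n : ℕ in atTop, ‖A ^ n‖ ≤ (r : ℝ) ^ n := by
    filter_upwards [hev, eventually_ge_atTop 1] with n hn hn1
    have hn0 : (n : ℝ) ≠ 0 := Nat.cast_ne_zero.mpr (by omega)
    have h1 : ((‖B ^ n‖₊ : ENNReal) ^ (1 / (n : ℝ))) ^ (n : ℝ) < (r : ENNReal) ^ (n : ℝ) :=
      ENNReal.rpow_lt_rpow hn (by positivity)
    rw [← ENNReal.rpow_mul, one_div_mul_cancel hn0, ENNReal.rpow_one] at h1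
    have h2 : (‖B ^ n‖₊ : ENNReal) < ((r ^ n : NNReal) : ENNReal) := by
      rwa [ENNReal.rpow_natCast, ← ENNReal.coe_pow] at h1
    have h3 : ‖B ^ n‖₊ < r ^ n := by exact_mod_cast h2
    have h4 : ‖B ^ n‖ ≤ (r : ℝ) ^ n := by
      have := h3.le
      rw [← NNReal.coe_le_coe] at this
      simpa [coe_nnnorm] using this
    calc ‖A ^ n‖ = ‖B ^ n‖ := by rw [hmap, norm_map_ofReal]
      _ ≤ (r : ℝ) ^ n := h4
  refine Summable.of_norm_bounded_eventually_nat
    (summable_geometric_of_lt_one r.coe_nonneg hrlt) ?_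
  filter_upwards [hbound] with n hn
  simpa [abs_of_nonneg (norm_nonneg _)] using hn

theorem stmt_3 {N d : ℕ} {M : Type*} (φ : M ≃ M) (ω : M → Fin d → ℝ)
    (hω : ∃ K : ℝ, ∀ x, ‖ω x‖ ≤ K)
    (A : Matrix (Fin N) (Fin N) ℝ) (hA : specRad A < 1)
    (C : Matrix (Fin N) (Fin d) ℝ)
    (f : M → Fin N → ℝ)
    (hf : ∀ x, f x = ∑' k : ℕ, (A ^ k * C).mulVec (ω ((⇑φ.symm)^[k] x))) :
    ∀ x : M, f (φ x) = A.mulVec (f x) + C.mulVec (ω (φ x)) := by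
  obtain ⟨K, hK⟩ := hω
  set K' : ℝ := max K 0 with hK'def
  have hK' : ∀ x, ‖ω x‖ ≤ K' := fun x => (hK x).trans (le_max_left _ _)
  have hsum : ∀ x : M,
      Summable fun k : ℕ => (A ^ k * C).mulVec (ω ((⇑φ.symm)^[k] x)) := by
    intro x
    refine Summable.of_norm_bounded (g := fun k => ‖A ^ k‖ * (‖C‖ * K'))
      ((summable_norm_pow A hA).mul_right _) fun k => ?_
    calc ‖(A ^ k * C).mulVec (ω ((⇑φ.symm)^[k] x))‖
        ≤ ‖A ^ k * C‖ * ‖ω ((⇑φ.symm)^[k] x)‖ := Matrix.linfty_opNorm_mulVec _ _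
      _ ≤ (‖A ^ k‖ * ‖C‖) * K' := by
          apply mul_le_mul (Matrix.linfty_opNorm_mul _ _) (hK' _) (norm_nonneg _)
          positivity
      _ = ‖A ^ k‖ * (‖C‖ * K') := by ring
  intro x
  rw [hf (φ x), hf x, Summable.tsum_eq_zero_add (hsum (φ x))]
  have h0 : (A ^ 0 * C).mulVec (ω ((⇑φ.symm)^[0] (φ x))) = C.mulVec (ω (φ x)) := by
    simp
  have htail : ∀ n : ℕ,
      (A ^ (n + 1) * C).mulVec (ω ((⇑φ.symm)^[n + 1] (φ x)))
        = A.mulVec ((A ^ n * C).mulVec (ω ((⇑φ.symm)^[n] x))) := by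
    intro n
    rw [Function.iterate_succ_apply, Equiv.symm_apply_apply, pow_succ', Matrix.mul_assoc, ← Matrix.mulVec_mulVec]
  have hlin : ∑' n : ℕ, A.mulVec ((A ^ n * C).mulVec (ω ((⇑φ.symm)^[n] x)))
      = A.mulVec (∑' n : ℕ, (A ^ n * C).mulVec (ω ((⇑φ.symm)^[n] x))) := by
    have hc : Continuous (A.mulVec : (Fin N → ℝ) → (Fin N → ℝ)) :=
      LinearMap.continuous_of_finiteDimensional A.mulVecLin
    exact ((hsum x).hasSum.map A.mulVecLin hc).tsum_eq
  simp only [htail, h0, hlin]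
  rw [add_comm]
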